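/- Let δ > 0, and let M, N : [0,T₁) → ℝ be differentiable with N(t) > 0, M'(t) ≤ −M(t)² + δN(t), and N'(t) = −M(t)N(t) for all t ∈ [0,T₁), where M(0) < −√(2δN(0)), T₁ = −(M(0)+√(M(0)²−2δN(0)))/(δN(0)) and T₂ = −(M(0)−√(M(0)²−2δN(0)))/(δN(0)). Then for every t ∈ [0,T₁): (T₁−t)M(t) ≤ −2(t−(T₁+T₂)/2)/(t−T₂); consequently liminf_{t→T₁⁻} (T₁−t)M(t) ≤ −1. -/

import Mathlib

open Set Filter

lemma riccati_mono_of_deriv (b T : ℝ) (f f' : ℝ → ℝ)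
    (hf : ∀ x ∈ Ico b T, HasDerivAt f (f' x) x)
    (h0 : ∀ x ∈ Ico b T, 0 ≤ f' x) :
    ∀ t ∈ Ico b T, f b ≤ f t := by
  intro t ht
  have hsub : Icc b t ⊆ Ico b T := fun x hx => ⟨hx.1, lt_of_le_of_lt hx.2 ht.2⟩
  have hmono : MonotoneOn f (Icc b t) := by
    refine monotoneOn_of_deriv_nonneg (convex_Icc b t)
      (fun x hx => (hf x (hsub hx)).continuousAt.continuousWithinAt) ?_ ?_
    · intro x hx
      rw [interior_Icc] at hx
      exact (hf x (hsub (Ioo_subset_Icc_self hx))).differentiableAt.differentiableWithinAt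
    · intro x hx
      rw [interior_Icc] at hx
      rw [(hf x (hsub (Ioo_subset_Icc_self hx))).deriv]
      exact h0 x (hsub (Ioo_subset_Icc_self hx))
  exact hmono (left_mem_Icc.2 ht.1) ⟨ht.1, le_rfl⟩ ht.1

set_option maxHeartbeats 2000000 in
/-- Blow-up rate estimate: if `N > 0`, `M' ≤ -M² + δN`, `N' = -MN` on `[0,T₁)`
with `M(0) < -√(2δN(0))`, where `T₁ < T₂` are the two roots
`T₁ = -(M(0) + √(M(0)² - 2δN(0)))/(δN(0))`,
`T₂ = -(M(0) - √(M(0)² - 2δN(0)))/(δN(0))`, then for `t ∈ [0,T₁)` one has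
`(T₁ - t) M(t) ≤ -2 (t - (T₁+T₂)/2)/(t - T₂)`, and consequently
`liminf_{t→T₁⁻} (T₁ - t) M(t) ≤ -1`. -/
theorem riccati_blow_up_rate (δ T₁ T₂ : ℝ) (hδ : 0 < δ)
    (M N M' : ℝ → ℝ) (hN0 : 0 < N 0)
    (hNpos : ∀ t ∈ Ico (0:ℝ) T₁, 0 < N t)
    (hM : ∀ t ∈ Ico (0:ℝ) T₁, HasDerivAt M (M' t) t)
    (hM' : ∀ t ∈ Ico (0:ℝ) T₁, M' t ≤ -(M t) ^ 2 + δ * N t)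
    (hN : ∀ t ∈ Ico (0:ℝ) T₁, HasDerivAt N (-(M t * N t)) t)
    (hM0 : M 0 < -Real.sqrt (2 * δ * N 0))
    (hT₁ : T₁ = -((M 0 + Real.sqrt ((M 0) ^ 2 - 2 * δ * N 0)) / (δ * N 0)))
    (hT₂ : T₂ = -((M 0 - Real.sqrt ((M 0) ^ 2 - 2 * δ * N 0)) / (δ * N 0))) :
    (∀ t ∈ Ico (0:ℝ) T₁,
      (T₁ - t) * M t ≤ -2 * (t - (T₁ + T₂) / 2) / (t - T₂)) ∧
    liminf (fun t => (T₁ - t) * M t) (nhdsWithin T₁ (Iio T₁)) ≤ -1 := by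
  set a := M 0 with ha
  set n := N 0 with hn
  have hnpos : 0 < n := hN0
  have hδn : 0 < δ * n := mul_pos hδ hN0
  have h2δn : (0:ℝ) ≤ 2 * δ * n := by positivity
  have hM0neg : a < 0 := lt_of_lt_of_le hM0 (neg_nonpos.mpr (Real.sqrt_nonneg _))
  have hsq : 2 * δ * n < a ^ 2 := by
    have h1 : Real.sqrt (2 * δ * n) < -a := by linarith
    have h2 := Real.sq_sqrt h2δn
    nlinarith [Real.sqrt_nonneg (2 * δ * n)]
  set s := Real.sqrt (a ^ 2 - 2 * δ * n) with hs
  have hs2 : s ^ 2 = a ^ 2 - 2 * δ * n := Real.sq_sqrt (by linarith)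
  have hspos : 0 < s := Real.sqrt_pos.2 (by linarith)
  have hslt : s < -a := by nlinarith [hs2, hspos, hM0neg, hδn]
  have e1 : δ * n * T₁ = -(a + s) := by rw [hT₁]; field_simp
  have e2 : δ * n * T₂ = -(a - s) := by rw [hT₂]; field_simp
  have hT1pos : 0 < T₁ := by
    rw [hT₁]
    have h1 : a + s < 0 := by linarith
    have := div_neg_of_neg_of_pos h1 hδn
    linarith
  have hT12 : T₁ < T₂ := by nlinarith [e1, e2, hspos, hδn]
  have hsum : δ * n * (T₁ + T₂) = -(2 * a) := by linear_combination e1 + e2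
  have hprod : δ * n * (T₁ * T₂) = 2 := by
    have h4 : (δ * n) * (δ * n * (T₁ * T₂)) = (δ * n) * 2 := by
      linear_combination (δ * n * T₂) * e1 - (a + s) * e2 - hs2
    exact mul_left_cancel₀ hδn.ne' h4
  -- derivative of W = M/N
  have hW : ∀ t ∈ Ico (0:ℝ) T₁, HasDerivAt (fun x => M x / N x)
      ((M' t * N t - M t * (-(M t * N t))) / (N t) ^ 2) t :=
    fun t ht => (hM t ht).div (hN t ht) (hNpos t ht).ne'
  have hWle : ∀ t ∈ Ico (0:ℝ) T₁, (M' t * N t - M t * (-(M t * N t))) / (N t) ^ 2 ≤ δ := by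
    intro t ht
    rw [div_le_iff₀ (pow_pos (hNpos t ht) 2)]
    nlinarith [hM' t ht, hNpos t ht, mul_le_mul_of_nonneg_right (hM' t ht) (hNpos t ht).le]
  -- comparison for W from arbitrary base point
  have hWcomp : ∀ b ∈ Ico (0:ℝ) T₁, ∀ t ∈ Ico b T₁,
      M t / N t ≤ M b / N b + δ * (t - b) := by
    intro b hb t ht
    have key := riccati_mono_of_deriv b T₁
      (fun x => M b / N b + δ * (x - b) - M x / N x)
      (fun x => δ - (M' x * N x - M x * (-(M x * N x))) / (N x) ^ 2)
      (fun x hx => by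
        have hx' : x ∈ Ico (0:ℝ) T₁ := ⟨le_trans hb.1 hx.1, hx.2⟩
        have h1 : HasDerivAt (fun y => M b / N b + δ * (y - b)) δ x := by
          simpa using (((hasDerivAt_id x).sub_const b).const_mul δ).const_add (M b / N b)
        exact h1.sub (hW x hx'))
      (fun x hx => by
        have hx' : x ∈ Ico (0:ℝ) T₁ := ⟨le_trans hb.1 hx.1, hx.2⟩
        exact sub_nonneg.mpr (hWle x hx'))
      t ht
    simp only [sub_self, mul_zero, add_zero] at key
    linarith
  -- derivative of u = 1/N
  have hu : ∀ t ∈ Ico (0:ℝ) T₁, HasDerivAt (fun x => (N x)⁻¹) (M t / N t) t := by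
    intro t ht
    have hne := (hNpos t ht).ne'
    have h := (hN t ht).inv hne
    have e : M t / N t = -(-(M t * N t)) / N t ^ 2 := by
      rw [div_eq_div_iff hne (pow_ne_zero 2 hne)]
      ring
    rw [e]
    exact h
  -- comparison for u from arbitrary base point
  have hucomp : ∀ b ∈ Ico (0:ℝ) T₁, ∀ t ∈ Ico b T₁,
      (N t)⁻¹ ≤ (N b)⁻¹ + (M b / N b) * (t - b) + (δ / 2) * (t - b) ^ 2 := by
    intro b hb t ht
    have key := riccati_mono_of_deriv b T₁
      (fun x => (N b)⁻¹ + (M b / N b) * (x - b) + (δ / 2) * (x - b) ^ 2 - (N x)⁻¹)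
      (fun x => (M b / N b + δ * (x - b)) - M x / N x)
      (fun x hx => by
        have hx' : x ∈ Ico (0:ℝ) T₁ := ⟨le_trans hb.1 hx.1, hx.2⟩
        have h1 : HasDerivAt (fun y => (N b)⁻¹ + (M b / N b) * (y - b) + (δ / 2) * (y - b) ^ 2)
            (M b / N b + δ * (x - b)) x := by
          have hb1 : HasDerivAt (fun y => (N b)⁻¹ + (M b / N b) * (y - b))
              (M b / N b) x := by
            simpa using (((hasDerivAt_id x).sub_const b).const_mul (M b / N b)).const_add (N b)⁻¹
          have hb2 : HasDerivAt (fun y => (δ / 2) * (y - b) ^ 2) (δ * (x - b)) x := by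
            have := (((hasDerivAt_id x).sub_const b).pow 2).const_mul (δ / 2)
            exact this.congr_deriv (by norm_num [id]; ring)
          exact hb1.add hb2
        exact h1.sub (hu x hx'))
      (fun x hx => by
        have hx' : x ∈ Ico (0:ℝ) T₁ := ⟨le_trans hb.1 hx.1, hx.2⟩
        exact sub_nonneg.mpr (hWcomp b hb x hx))
      t ht
    simp only [sub_self, mul_zero, add_zero, zero_pow, ne_eq, OfNat.ofNat_ne_zero,
      not_false_eq_true] at key
    linarith
  have h0mem : (0:ℝ) ∈ Ico (0:ℝ) T₁ := ⟨le_rfl, hT1pos⟩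
  -- upper bound S1 : W t ≤ a/n + δ t
  have S1 : ∀ t ∈ Ico (0:ℝ) T₁, M t / N t ≤ a / n + δ * t := by
    intro t ht
    have := hWcomp 0 h0mem t (by simpa using ht)
    simpa using this
  -- S2 : 1/N t ≤ (δ/2)(t-T₁)(t-T₂)
  have S2 : ∀ t ∈ Ico (0:ℝ) T₁, (N t)⁻¹ ≤ (δ / 2) * ((t - T₁) * (t - T₂)) := by
    intro t ht
    have h5 := hucomp 0 h0mem t (by simpa using ht)
    simp only [sub_zero] at h5
    have hq : (N 0)⁻¹ + (M 0 / N 0) * t + (δ / 2) * t ^ 2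
        = (δ / 2) * ((t - T₁) * (t - T₂)) := by
      rw [← ha, ← hn]
      field_simp
      ring_nf
      linear_combination t * hsum - hprod
    linarith [h5, hq.le, hq.ge]

  -- midpoint / algebraic facts
  have ha_div : a / n = -(δ * (T₁ + T₂)) / 2 := by
    rw [div_eq_iff hnpos.ne']
    linear_combination hsum / 2
  -- Part 1
  have part1 : ∀ t ∈ Ico (0:ℝ) T₁, (T₁ - t) * M t ≤ -2 * (t - (T₁ + T₂) / 2) / (t - T₂) := by
    intro t ht
    have hNt := hNpos t ht
    have hA : 0 < T₁ - t := sub_pos.mpr ht.2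
    have hB : 0 < T₂ - t := by linarith [ht.2]
    have hcpos : 0 < (T₁ + T₂) / 2 - t := by linarith [ht.2]
    have hf2 := S2 t ht
    have h1N : (1:ℝ) ≤ (δ / 2) * ((t - T₁) * (t - T₂)) * N t := by
      have hmul := mul_le_mul_of_nonneg_right hf2 hNt.le
      rwa [inv_mul_cancel₀ hNt.ne'] at hmul
    have h2 : 2 ≤ δ * ((T₁ - t) * (T₂ - t)) * N t := by nlinarith [h1N]
    have hf1 := S1 t ht
    rw [div_le_iff₀ hNt] at hf1
    have hMt' : M t ≤ -(δ * ((T₁ + T₂) / 2 - t)) * N t := by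
      have heq : a / n + δ * t = -(δ * ((T₁ + T₂) / 2 - t)) := by rw [ha_div]; ring
      calc M t ≤ (a / n + δ * t) * N t := hf1
        _ = -(δ * ((T₁ + T₂) / 2 - t)) * N t := by rw [heq]
    have hstep : (T₁ - t) * M t ≤ (T₁ - t) * (-(δ * ((T₁ + T₂) / 2 - t)) * N t) :=
      mul_le_mul_of_nonneg_left hMt' hA.le
    have hval : (T₁ - t) * (-(δ * ((T₁ + T₂) / 2 - t)) * N t)
        ≤ -(2 * ((T₁ + T₂) / 2 - t)) / (T₂ - t) := by
      rw [le_div_iff₀ hB]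
      have hnn := mul_nonneg hcpos.le (sub_nonneg.mpr h2)
      have hid : -(2 * ((T₁ + T₂) / 2 - t))
          - (T₁ - t) * (-(δ * ((T₁ + T₂) / 2 - t)) * N t) * (T₂ - t)
          = ((T₁ + T₂) / 2 - t) * (δ * ((T₁ - t) * (T₂ - t)) * N t - 2) := by ring
      linarith [hid.le, hid.ge, hnn]
    have hBne : t - T₂ ≠ 0 := by intro h; linarith
    have hrhs : -(2 * ((T₁ + T₂) / 2 - t)) / (T₂ - t)
        = -2 * (t - (T₁ + T₂) / 2) / (t - T₂) := by
      rw [div_eq_div_iff hB.ne' hBne]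
      ring
    linarith [hstep, hval, hrhs.le, hrhs.ge]
  have hκ : 0 < δ * (T₂ - T₁) / 2 := div_pos (mul_pos hδ (sub_pos.mpr hT12)) two_pos
  -- S3 : (δ * (T₂ - T₁) / 2) (T₁ - t) ≤ 1/N t
  have S3 : ∀ t ∈ Ico (0:ℝ) T₁, (δ * (T₂ - T₁) / 2) * (T₁ - t) ≤ (N t)⁻¹ := by
    intro t ht
    have key := riccati_mono_of_deriv t T₁ (fun x => -(N x)⁻¹ - (δ * (T₂ - T₁) / 2) * x)
      (fun x => -(M x / N x) - (δ * (T₂ - T₁) / 2))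
      (fun x hx => by
        have hx' : x ∈ Ico (0:ℝ) T₁ := ⟨le_trans ht.1 hx.1, hx.2⟩
        have h2 : HasDerivAt (fun y => (δ * (T₂ - T₁) / 2) * y) (δ * (T₂ - T₁) / 2) x := by
          simpa using (hasDerivAt_id x).const_mul (δ * (T₂ - T₁) / 2)
        exact (hu x hx').neg.sub h2)
      (fun x hx => by
        have hx' : x ∈ Ico (0:ℝ) T₁ := ⟨le_trans ht.1 hx.1, hx.2⟩
        have hle := S1 x hx'
        have hth : a / n + δ * x ≤ -(δ * (T₂ - T₁) / 2) := by
          rw [ha_div]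
          nlinarith [mul_lt_mul_of_pos_left (show x < T₁ from hx.2) hδ]
        linarith)
    have hev : ∀ᶠ t' in nhdsWithin T₁ (Iio T₁), (δ * (T₂ - T₁) / 2) * (t' - t) ≤ (N t)⁻¹ := by
      have hgt : ∀ᶠ t' in nhdsWithin T₁ (Iio T₁), t < t' :=
        eventually_nhdsWithin_of_eventually_nhds (eventually_gt_nhds ht.2)
      filter_upwards [hgt, self_mem_nhdsWithin] with t' h1 h2
      have h3 := key t' ⟨h1.le, h2⟩
      have h4 : 0 < (N t')⁻¹ := inv_pos.mpr (hNpos t' ⟨le_trans ht.1 h1.le, h2⟩)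
      nlinarith [h3, h4]
    have htend : Tendsto (fun t' => (δ * (T₂ - T₁) / 2) * (t' - t)) (nhdsWithin T₁ (Iio T₁))
        (nhds ((δ * (T₂ - T₁) / 2) * (T₁ - t))) := by
      apply Tendsto.mono_left _ nhdsWithin_le_nhds
      exact Continuous.tendsto (by fun_prop) T₁
    exact le_of_tendsto htend hev
  -- S4
  have S4 : ∀ t ∈ Ico (0:ℝ) T₁,
      0 ≤ (N t)⁻¹ + (M t / N t) * (T₁ - t) + (δ / 2) * (T₁ - t) ^ 2 := by
    intro t ht
    have hev : ∀ᶠ t' in nhdsWithin T₁ (Iio T₁),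
        0 ≤ (N t)⁻¹ + (M t / N t) * (t' - t) + (δ / 2) * (t' - t) ^ 2 := by
      have hgt : ∀ᶠ t' in nhdsWithin T₁ (Iio T₁), t < t' :=
        eventually_nhdsWithin_of_eventually_nhds (eventually_gt_nhds ht.2)
      filter_upwards [hgt, self_mem_nhdsWithin] with t' h1 h2
      have h3 := hucomp t ht t' ⟨h1.le, h2⟩
      have h4 : 0 < (N t')⁻¹ := inv_pos.mpr (hNpos t' ⟨le_trans ht.1 h1.le, h2⟩)
      linarith
    have htend : Tendsto (fun t' => (N t)⁻¹ + (M t / N t) * (t' - t) + (δ / 2) * (t' - t) ^ 2)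
        (nhdsWithin T₁ (Iio T₁))
        (nhds ((N t)⁻¹ + (M t / N t) * (T₁ - t) + (δ / 2) * (T₁ - t) ^ 2)) := by
      apply Tendsto.mono_left _ nhdsWithin_le_nhds
      exact Continuous.tendsto (by fun_prop) T₁
    exact ge_of_tendsto htend hev
  -- lower bound on (T₁ - t) M t
  have hlow : ∀ t ∈ Ico (0:ℝ) T₁, -1 - δ / (2 * (δ * (T₂ - T₁) / 2)) * T₁ ≤ (T₁ - t) * M t := by
    intro t ht
    have hNt := hNpos t ht
    have hA' : 0 < T₁ - t := sub_pos.mpr ht.2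
    have h4 := S4 t ht
    have h5 : 0 ≤ 1 + M t * (T₁ - t) + δ / 2 * (T₁ - t) ^ 2 * N t := by
      have h6 := mul_nonneg h4 hNt.le
      have h7 : ((N t)⁻¹ + (M t / N t) * (T₁ - t) + (δ / 2) * (T₁ - t) ^ 2) * N t
          = 1 + M t * (T₁ - t) + δ / 2 * (T₁ - t) ^ 2 * N t := by
        field_simp
      linarith [h6, h7.le, h7.ge]
    have h9 := S3 t ht
    have h11 : N t ≤ ((δ * (T₂ - T₁) / 2) * (T₁ - t))⁻¹ := by
      have := inv_anti₀ (mul_pos hκ hA') h9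
      rwa [inv_inv] at this
    have h8 : δ / 2 * (T₁ - t) ^ 2 * N t ≤ δ / (2 * (δ * (T₂ - T₁) / 2)) * (T₁ - t) := by
      calc δ / 2 * (T₁ - t) ^ 2 * N t ≤ δ / 2 * (T₁ - t) ^ 2 * ((δ * (T₂ - T₁) / 2) * (T₁ - t))⁻¹ :=
            mul_le_mul_of_nonneg_left h11 (by positivity)
        _ = δ / (2 * (δ * (T₂ - T₁) / 2)) * (T₁ - t) := by
            have hne1 : T₂ - T₁ ≠ 0 := sub_ne_zero.mpr hT12.ne'
            have hne2 : T₁ - t ≠ 0 := hA'.ne'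
            field_simp
    have h12 : δ / (2 * (δ * (T₂ - T₁) / 2)) * (T₁ - t) ≤ δ / (2 * (δ * (T₂ - T₁) / 2)) * T₁ :=
      mul_le_mul_of_nonneg_left (by linarith [ht.1]) (by positivity)
    nlinarith [h5, h8, h12]
  -- conclusion
  refine ⟨part1, ?_⟩
  have hevmem : ∀ᶠ t in nhdsWithin T₁ (Iio T₁), t ∈ Ico (0:ℝ) T₁ := by
    have h0 : ∀ᶠ t in nhdsWithin T₁ (Iio T₁), (0:ℝ) < t :=
      eventually_nhdsWithin_of_eventually_nhds (eventually_gt_nhds hT1pos)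
    filter_upwards [h0, self_mem_nhdsWithin] with t h1 h2
    exact ⟨h1.le, h2⟩
  have hev : ∀ᶠ t in nhdsWithin T₁ (Iio T₁),
      (T₁ - t) * M t ≤ -2 * (t - (T₁ + T₂) / 2) / (t - T₂) :=
    hevmem.mono fun t ht => part1 t ht
  have hbdd : IsBoundedUnder (· ≥ ·) (nhdsWithin T₁ (Iio T₁)) (fun t => (T₁ - t) * M t) :=
    ⟨-1 - δ / (2 * (δ * (T₂ - T₁) / 2)) * T₁, eventually_map.2 (hevmem.mono fun t ht => hlow t ht)⟩
  have htendg : Tendsto (fun t => -2 * (t - (T₁ + T₂) / 2) / (t - T₂)) (nhdsWithin T₁ (Iio T₁))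
      (nhds (-1)) := by
    have hne : T₁ - T₂ ≠ 0 := by intro h; linarith
    have hc : ContinuousAt (fun t => -2 * (t - (T₁ + T₂) / 2) / (t - T₂)) T₁ :=
      ContinuousAt.div (by fun_prop) (by fun_prop) hne
    have hval : -2 * (T₁ - (T₁ + T₂) / 2) / (T₁ - T₂) = -1 := by
      rw [div_eq_iff hne]; ring
    have h2 := hc.tendsto.mono_left
      (show nhdsWithin T₁ (Iio T₁) ≤ nhds T₁ from nhdsWithin_le_nhds)
    rwa [hval] at h2
  have hcob : IsCoboundedUnder (· ≥ ·) (nhdsWithin T₁ (Iio T₁))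
      (fun t => -2 * (t - (T₁ + T₂) / 2) / (t - T₂)) :=
    htendg.isBoundedUnder_le.isCoboundedUnder_ge
  calc liminf (fun t => (T₁ - t) * M t) (nhdsWithin T₁ (Iio T₁))
      ≤ liminf (fun t => -2 * (t - (T₁ + T₂) / 2) / (t - T₂)) (nhdsWithin T₁ (Iio T₁)) :=
        liminf_le_liminf hev hbdd hcob
    _ = -1 := htendg.liminf_eq
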